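/- For n ≥ 3, the number of partial isometries of C_n with domain of size 1 is n², and for each k with 3 ≤ k ≤ n, the number of partial isometries of C_n with domain of size k is 2n·C(n,k). -/
import Mathlib


/-- Geodesic distance on the cycle graph `C_n` with vertices `{1,...,n}`:
`d(x,y) = min (|x-y|, n-|x-y|)`. -/
def cdist (n x y : ℕ) : ℕ := min ((x : ℤ) - y).natAbs (n - ((x : ℤ) - y).natAbs)

/-- The n-cycle permutation `g` of `{1,...,n}`: `i ↦ i+1 (mod n)`. -/
def gfun (n i : ℕ) : ℕ := if i < n then i + 1 else 1

/-- The reversal permutation `h` of `{1,...,n}`: `i ↦ n-i+1`. -/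
def hfun (n i : ℕ) : ℕ := n - i + 1

/-- Left-to-right composition of partial maps (apply `f`, then `g`). -/
def pcomp (f g : ℕ → Option ℕ) : ℕ → Option ℕ := fun x => (f x).bind g

/-- The partial identity on `{1,...,n}`. -/
def pid (n : ℕ) : ℕ → Option ℕ := fun i => if i ∈ Finset.Icc 1 n then some i else none

/-- `g` as a partial map with domain `{1,...,n}`. -/
def gmap (n : ℕ) : ℕ → Option ℕ := fun i => if i ∈ Finset.Icc 1 n then some (gfun n i) else none

/-- `h` as a partial map with domain `{1,...,n}`. -/
def hmap (n : ℕ) : ℕ → Option ℕ := fun i => if i ∈ Finset.Icc 1 n then some (hfun n i) else none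

/-- `e_j`: the partial identity with domain `{1,...,n} \ {j}`. -/
def emap (n j : ℕ) : ℕ → Option ℕ := fun i => if i ∈ Finset.Icc 1 n ∧ i ≠ j then some i else none

/-- `k`-th power of a partial map (with identity `pid n`). -/
def ppow (n : ℕ) (f : ℕ → Option ℕ) : ℕ → (ℕ → Option ℕ)
  | 0 => pid n
  | k + 1 => pcomp f (ppow n f k)

/-- `f` is a partial isometry of the cycle graph `C_n`: a partial injective map on
`{1,...,n}` preserving the cycle distance. -/
def PIso (n : ℕ) (f : ℕ → Option ℕ) : Prop :=
  (∀ x y, f x = some y → x ∈ Finset.Icc 1 n ∧ y ∈ Finset.Icc 1 n) ∧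
  (∀ x y z, f x = some z → f y = some z → x = y) ∧
  (∀ x y x' y', f x = some x' → f y = some y' → cdist n x' y' = cdist n x y)

/-- Domain of a partial map, as a set. -/
def DomS (f : ℕ → Option ℕ) : Set ℕ := {x | (f x).isSome}

/-- Image of a partial map, as a set. -/
def ImS (f : ℕ → Option ℕ) : Set ℕ := {y | ∃ x, f x = some y}

/-- Domain of a partial map on `{1,...,n}`, as a finset. -/
def domF (n : ℕ) (f : ℕ → Option ℕ) : Finset ℕ :=
  (Finset.Icc 1 n).filter (fun x => (f x).isSome)

/-- The dihedral group `D_{2n}` as the set of the permutations `g^k` and `h·g^k`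
(acting on the right, so `h·g^k` applies `h` first) of `{1,...,n}`, `0 ≤ k ≤ n-1`. -/
def Dih (n : ℕ) : Set (ℕ → ℕ) :=
  {σ | ∃ k < n, σ = (gfun n)^[k] ∨ σ = fun i => (gfun n)^[k] (hfun n i)}

/-- `σ` extends the partial map `f`. -/
def Extends (σ : ℕ → ℕ) (f : ℕ → Option ℕ) : Prop := ∀ x y, f x = some y → σ x = y



section Aux
variable (n : ℕ) [NeZero n]

def zrep (z : ZMod n) : ℕ := if z.val = 0 then n else z.val

lemma zrep_mem (z : ZMod n) : zrep n z ∈ Finset.Icc 1 n := by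
  have h := ZMod.val_lt z
  have h0 := NeZero.pos n
  unfold zrep
  split_ifs <;> simp only [Finset.mem_Icc] <;> omega

lemma cast_zrep (z : ZMod n) : ((zrep n z : ℕ) : ZMod n) = z := by
  unfold zrep
  split_ifs with h
  · simp [ZMod.natCast_self, ((ZMod.val_eq_zero z).mp h).symm]
  · exact ZMod.natCast_zmod_val z

lemma zrep_cast {x : ℕ} (hx : x ∈ Finset.Icc 1 n) : zrep n ((x : ℕ) : ZMod n) = x := by
  simp only [Finset.mem_Icc] at hx
  unfold zrep
  rcases eq_or_lt_of_le hx.2 with h | h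
  · subst h; simp [ZMod.natCast_self]
  · simp only [ZMod.val_cast_of_lt h]
    rw [if_neg (by omega)]

lemma cast_inj_Icc {x y : ℕ} (hx : x ∈ Finset.Icc 1 n) (hy : y ∈ Finset.Icc 1 n)
    (h : ((x : ℕ) : ZMod n) = y) : x = y := by
  have h1 := zrep_cast n hx
  rw [h, zrep_cast n hy] at h1
  omega

def zdist (d : ZMod n) : ℕ := min d.val (n - d.val)

lemma zdist_neg (d : ZMod n) : zdist n (-d) = zdist n d := by
  unfold zdist
  rw [ZMod.neg_val]
  have h := ZMod.val_lt d
  split_ifs with hd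
  · simp [hd]
  · have : d.val ≠ 0 := fun h0 => hd ((ZMod.val_eq_zero d).mp h0)
    omega

lemma zdist_eq_iff (d e : ZMod n) : zdist n d = zdist n e ↔ e = d ∨ e = -d := by
  constructor
  · intro h
    have hd := ZMod.val_lt d
    have he := ZMod.val_lt e
    unfold zdist at h
    have hor : e.val = d.val ∨ (e.val = n - d.val ∧ d.val ≠ 0) := by omega
    rcases hor with h1 | ⟨h1, h2⟩
    · left; exact ZMod.val_injective n h1
    · right
      have hd0 : d ≠ 0 := fun h0 => h2 (by rw [h0]; exact ZMod.val_zero)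
      have : (-d).val = n - d.val := by rw [ZMod.neg_val, if_neg hd0]
      exact ZMod.val_injective n (by omega)
  · rintro (rfl | rfl)
    · rfl
    · exact (zdist_neg n d).symm

lemma cdist_eq_zdist {x y : ℕ} (hx : x ∈ Finset.Icc 1 n) (hy : y ∈ Finset.Icc 1 n) :
    cdist n x y = zdist n ((x : ZMod n) - (y : ZMod n)) := by
  simp only [Finset.mem_Icc] at hx hy
  unfold cdist zdist
  rcases le_or_gt y x with h | h
  · have h1 : ((x : ℤ) - y).natAbs = x - y := by omega
    have h2 : ((x : ZMod n) - y) = ((x - y : ℕ) : ZMod n) := by push_cast [h]; ring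
    rw [h1, h2]
    rcases eq_or_lt_of_le hx.2 with hxn | hxn
    · rcases Nat.eq_zero_or_pos (x - y) with h3 | h3
      · simp [h3]
      · rw [ZMod.val_cast_of_lt (by omega)]
    · rw [ZMod.val_cast_of_lt (by omega)]
  · have h1 : ((x : ℤ) - y).natAbs = y - x := by omega
    have h2 : ((x : ZMod n) - y) = -(((y - x : ℕ) : ZMod n)) := by push_cast [le_of_lt h]; ring
    have h3 : (((y - x : ℕ) : ZMod n)).val = y - x := ZMod.val_cast_of_lt (by omega)
    have h4 : (((y - x : ℕ) : ZMod n)) ≠ 0 := by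
      intro h0
      rw [ZMod.natCast_eq_zero_iff] at h0
      have := Nat.le_of_dvd (by omega) h0
      omega
    rw [h1, h2, ZMod.neg_val, if_neg h4, h3]
    have hn := NeZero.pos n
    omega

lemma two_torsion_eq {u v : ZMod n} (hu : u ≠ 0) (hv : v ≠ 0)
    (h2u : 2 * u = 0) (h2v : 2 * v = 0) : u = v := by
  have hu' : u.val ≠ 0 := fun h => hu ((ZMod.val_eq_zero u).mp h)
  have hv' : v.val ≠ 0 := fun h => hv ((ZMod.val_eq_zero v).mp h)
  have hul := ZMod.val_lt u
  have hvl := ZMod.val_lt v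
  have e1 : ((2 * u.val : ℕ) : ZMod n) = 0 := by push_cast [ZMod.natCast_zmod_val]; exact h2u
  have e2 : ((2 * v.val : ℕ) : ZMod n) = 0 := by push_cast [ZMod.natCast_zmod_val]; exact h2v
  rw [ZMod.natCast_eq_zero_iff] at e1 e2
  have h1 : 2 * u.val = n := by
    rcases e1 with ⟨c, hc⟩
    have hc1 : c ≠ 0 := by rintro rfl; omega
    have hc2 : c < 2 := by by_contra hh; push_neg at hh; nlinarith
    have : c = 1 := by omega
    subst this; omega
  have h2 : 2 * v.val = n := by
    rcases e2 with ⟨c, hc⟩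
    have hc1 : c ≠ 0 := by rintro rfl; omega
    have hc2 : c < 2 := by by_contra hh; push_neg at hh; nlinarith
    have : c = 1 := by omega
    subst this; omega
  exact ZMod.val_injective n (by omega)

end Aux

section Amap
variable (n : ℕ) [NeZero n]

def amap (e c : ZMod n) (A : Finset ℕ) : ℕ → Option ℕ :=
  fun x => if x ∈ A then some (zrep n (e * x + c)) else none

lemma amap_some {e c : ZMod n} {A : Finset ℕ} {x : ℕ} (hx : x ∈ A) :
    amap n e c A x = some (zrep n (e * x + c)) := if_pos hx

lemma amap_eq_some {e c : ZMod n} {A : Finset ℕ} {x y : ℕ}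
    (h : amap n e c A x = some y) : x ∈ A ∧ y = zrep n (e * x + c) := by
  unfold amap at h
  split_ifs at h with hx
  exact ⟨hx, (Option.some_injective _ h).symm⟩

lemma domF_amap {e c : ZMod n} {A : Finset ℕ} (hA : A ⊆ Finset.Icc 1 n) :
    domF n (amap n e c A) = A := by
  ext x
  simp only [domF, Finset.mem_filter]
  constructor
  · rintro ⟨-, h⟩
    rw [Option.isSome_iff_exists] at h
    obtain ⟨y, hy⟩ := h
    exact (amap_eq_some n hy).1
  · intro hx
    exact ⟨hA hx, by rw [amap_some n hx]; rfl⟩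

lemma amap_PIso {e c : ZMod n} {A : Finset ℕ} (he : e = 1 ∨ e = -1)
    (hA : A ⊆ Finset.Icc 1 n) : PIso n (amap n e c A) := by
  have hunit : IsUnit e := by rcases he with rfl | rfl <;> simp
  refine ⟨?_, ?_, ?_⟩
  · intro x y h
    obtain ⟨hx, rfl⟩ := amap_eq_some n h
    exact ⟨hA hx, zrep_mem n _⟩
  · intro x y z hx hy
    obtain ⟨hxA, rfl⟩ := amap_eq_some n hx
    obtain ⟨hyA, hz⟩ := amap_eq_some n hy
    have : ((zrep n (e * x + c) : ℕ) : ZMod n) = ((zrep n (e * y + c) : ℕ) : ZMod n) := by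
      rw [hz]
    rw [cast_zrep, cast_zrep] at this
    have hxy : ((x : ℕ) : ZMod n) = ((y : ℕ) : ZMod n) := by
      have := add_right_cancel this
      exact hunit.mul_left_cancel this
    exact cast_inj_Icc n (hA hxA) (hA hyA) hxy
  · intro x y x' y' hx hy
    obtain ⟨hxA, rfl⟩ := amap_eq_some n hx
    obtain ⟨hyA, rfl⟩ := amap_eq_some n hy
    rw [cdist_eq_zdist n (zrep_mem n _) (zrep_mem n _),
        cdist_eq_zdist n (hA hxA) (hA hyA), cast_zrep, cast_zrep]
    have h1 : e * x + c - (e * y + c) = e * ((x : ZMod n) - y) := by ring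
    rw [h1]
    rcases he with rfl | rfl
    · rw [one_mul]
    · rw [neg_one_mul, zdist_neg]

lemma amap_injective {e e' c c' : ZMod n} {A A' : Finset ℕ}
    (he : e = 1 ∨ e = -1) (he' : e' = 1 ∨ e' = -1)
    (hA : A ⊆ Finset.Icc 1 n) (hcard : 3 ≤ A.card)
    (h : amap n e c A = amap n e' c' A') : e = e' ∧ c = c' ∧ A = A' := by
  have hAA : A = A' := by
    ext x
    constructor
    · intro hx
      have := amap_some n (e := e) (c := c) hx
      rw [h] at this
      exact (amap_eq_some n this).1
    · intro hx
      have := amap_some n (e := e') (c := c') hx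
      rw [← h] at this
      exact (amap_eq_some n this).1
  subst hAA
  have key : ∀ x ∈ A, e * (x : ZMod n) + c = e' * x + c' := by
    intro x hx
    have h1 := amap_some n (e := e) (c := c) hx
    rw [h, amap_some n hx] at h1
    have h2 := Option.some_injective _ h1
    have h3 := congrArg (fun m : ℕ => ((m : ℕ) : ZMod n)) h2
    simp only [cast_zrep] at h3
    exact h3.symm
  -- get three distinct elements of A
  obtain ⟨a, haA, b, hbA, hab, d, hdA, hda, hdb⟩ :
      ∃ a ∈ A, ∃ b ∈ A, a ≠ b ∧ ∃ d ∈ A, d ≠ a ∧ d ≠ b := by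
    obtain ⟨a, haA⟩ := Finset.card_pos.mp (show 0 < A.card by omega)
    obtain ⟨b, hbA, hab⟩ := Finset.exists_mem_ne (show 1 < A.card by omega) a
    have hsd : 0 < (A \ {a, b}).card := by
      have h1 := Finset.card_le_card_sdiff_add_card (s := A) (t := {a, b})
      have h2 : ({a, b} : Finset ℕ).card ≤ 2 :=
        (Finset.card_insert_le _ _).trans (by simp)
      omega
    obtain ⟨d, hdA⟩ := Finset.card_pos.mp hsd
    simp only [Finset.mem_sdiff, Finset.mem_insert, Finset.mem_singleton] at hdA
    exact ⟨a, haA, b, hbA, hab.symm, d, hdA.1, fun hh => hdA.2 (Or.inl hh),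
      fun hh => hdA.2 (Or.inr hh)⟩
  have castne : ∀ x ∈ A, ∀ y ∈ A, x ≠ y → ((x : ℕ) : ZMod n) - y ≠ 0 := by
    intro x hx y hy hxy h0
    exact hxy (cast_inj_Icc n (hA hx) (hA hy) (sub_eq_zero.mp h0))
  have hee : e = e' := by
    by_contra hne
    have hd1 : (e - e') * ((a : ZMod n) - b) = 0 := by
      have k1 := key a haA
      have k2 := key b hbA
      linear_combination k1 - k2
    have hd2 : (e - e') * ((a : ZMod n) - d) = 0 := by
      have k1 := key a haA
      have k2 := key d hdA
      linear_combination k1 - k2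
    have htwo : e - e' = 2 ∨ e - e' = -2 := by
      rcases he with rfl | rfl <;> rcases he' with rfl | rfl
      · exact absurd rfl hne
      · left; ring
      · right; ring
      · exact absurd rfl hne
    have h2ab : 2 * ((a : ZMod n) - b) = 0 := by
      rcases htwo with h | h <;> rw [h] at hd1
      · exact hd1
      · linear_combination -hd1
    have h2ad : 2 * ((a : ZMod n) - d) = 0 := by
      rcases htwo with h | h <;> rw [h] at hd2
      · exact hd2
      · linear_combination -hd2
    have := two_torsion_eq n (castne a haA b hbA hab) (castne a haA d hdA (fun hh => hda hh.symm))
      h2ab h2ad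
    have hbd : ((b : ℕ) : ZMod n) = d := by linear_combination -this
    exact hdb (cast_inj_Icc n (hA hbA) (hA hdA) hbd).symm
  subst hee
  refine ⟨rfl, ?_, rfl⟩
  have k1 := key a haA
  linear_combination k1

end Amap

lemma three_distinct {A : Finset ℕ} (hcard : 3 ≤ A.card) :
    ∃ a ∈ A, ∃ b ∈ A, a ≠ b ∧ ∃ d ∈ A, d ≠ a ∧ d ≠ b := by
  obtain ⟨a, haA⟩ := Finset.card_pos.mp (show 0 < A.card by omega)
  obtain ⟨b, hbA, hab⟩ := Finset.exists_mem_ne (show 1 < A.card by omega) a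
  have hsd : 0 < (A \ {a, b}).card := by
    have h1 := Finset.card_le_card_sdiff_add_card (s := A) (t := {a, b})
    have h2 : ({a, b} : Finset ℕ).card ≤ 2 :=
      (Finset.card_insert_le _ _).trans (by simp)
    omega
  obtain ⟨d, hdA⟩ := Finset.card_pos.mp hsd
  simp only [Finset.mem_sdiff, Finset.mem_insert, Finset.mem_singleton] at hdA
  exact ⟨a, haA, b, hbA, hab.symm, d, hdA.1, fun hh => hdA.2 (Or.inl hh),
    fun hh => hdA.2 (Or.inr hh)⟩

section Main
variable (n : ℕ) [NeZero n]

lemma PIso_eq_amap {f : ℕ → Option ℕ} (hf : PIso n f) (h3 : 3 ≤ (domF n f).card) :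
    ∃ e c : ZMod n, (e = 1 ∨ e = -1) ∧ f = amap n e c (domF n f) := by
  obtain ⟨hdom, hinj, hdist⟩ := hf
  set A := domF n f with hAdef
  have hA : A ⊆ Finset.Icc 1 n := Finset.filter_subset _ _
  set fv : ℕ → ℕ := fun x => (f x).getD 0 with hfv
  have hsome : ∀ x ∈ A, f x = some (fv x) := by
    intro x hx
    simp only [hAdef, domF, Finset.mem_filter] at hx
    obtain ⟨y, hy⟩ := Option.isSome_iff_exists.mp hx.2
    rw [hy]; simp [hfv, hy]
  have hfvIcc : ∀ x ∈ A, fv x ∈ Finset.Icc 1 n := fun x hx => (hdom x _ (hsome x hx)).2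
  have pres : ∀ x ∈ A, ∀ y ∈ A,
      ((fv x : ZMod n) - fv y) = ((x : ZMod n) - y) ∨
      ((fv x : ZMod n) - fv y) = -((x : ZMod n) - y) := by
    intro x hx y hy
    have h := hdist x y _ _ (hsome x hx) (hsome y hy)
    rw [cdist_eq_zdist n (hfvIcc x hx) (hfvIcc y hy), cdist_eq_zdist n (hA hx) (hA hy)] at h
    rw [zdist_eq_iff] at h
    rcases h with h | h
    · exact Or.inl h.symm
    · exact Or.inr (by linear_combination h)
  have castne : ∀ x ∈ A, ∀ y ∈ A, x ≠ y → ((x : ℕ) : ZMod n) - y ≠ 0 := by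
    intro x hx y hy hxy h0
    exact hxy (cast_inj_Icc n (hA hx) (hA hy) (sub_eq_zero.mp h0))
  -- find a pair with 2*(a-b) ≠ 0
  obtain ⟨a, haA, b, hbA, hab2⟩ :
      ∃ a ∈ A, ∃ b ∈ A, 2 * ((a : ZMod n) - b) ≠ 0 := by
    obtain ⟨a, haA, b, hbA, hab, d, hdA, hda, hdb⟩ := three_distinct h3
    by_cases h1 : 2 * ((a : ZMod n) - b) = 0
    · by_cases h2 : 2 * ((a : ZMod n) - d) = 0
      · exfalso
        have := two_torsion_eq n (castne a haA b hbA hab)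
          (castne a haA d hdA (fun hh => hda hh.symm)) h1 h2
        have hbd : ((b : ℕ) : ZMod n) = d := by linear_combination -this
        exact hdb (cast_inj_Icc n (hA hbA) (hA hdA) hbd).symm
      · exact ⟨a, haA, d, hdA, h2⟩
    · exact ⟨a, haA, b, hbA, h1⟩
  -- define the sign e and constant c
  obtain ⟨e, he, hFab⟩ : ∃ e : ZMod n, (e = 1 ∨ e = -1) ∧
      ((fv a : ZMod n) - fv b) = e * ((a : ZMod n) - b) := by
    rcases pres a haA b hbA with h | h
    · exact ⟨1, Or.inl rfl, by rw [one_mul]; exact h⟩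
    · exact ⟨-1, Or.inr rfl, by rw [neg_one_mul]; exact h⟩
  set c : ZMod n := (fv a : ZMod n) - e * a with hc
  have key : ∀ x ∈ A, ((fv x : ℕ) : ZMod n) = e * x + c := by
    intro x hx
    have h1 := pres a haA x hx
    have h2 := pres b hbA x hx
    have hsq : e * e = 1 := by rcases he with rfl | rfl <;> ring
    suffices hkey : (fv a : ZMod n) - fv x = e * ((a : ZMod n) - x) by
      rw [hc]; linear_combination -hkey
    rcases h1 with h1 | h1 <;> rcases h2 with h2 | h2 <;> rcases he with rfl | rfl
    · linear_combination h1
    ·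
      -- hFab: Fa-Fb = -(a-b); (Fa-Fx)-(Fb-Fx) = (a-x)-(b-x) = (a-b). so 2(a-b)=0 contra
      exfalso
      exact hab2 (by linear_combination h2 + hFab - h1)
    · -- e = 1, h1 = +, h2 = -: fine, already h1 works
      linear_combination h1
    · -- e = -1, h1 = +, h2 = -: Fa-Fb = -(a-b); (Fa-Fx)-(Fb-Fx) = (a-x)+(b-x)
      -- (a-x)+(b-x) = -(a-b) => 2(a-x) = 0? a - x + b - x + a - b = 2a-2x. yes 2(a-x)=0
      have h0 : 2 * ((a : ZMod n) - x) = 0 := by linear_combination h2 + hFab - h1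
      linear_combination h1 + h0
    · -- e = 1, h1 = -, h2 = +: (Fa-Fx)-(Fb-Fx) = -(a-x)-(b-x) = (a-b) => -2a+2x+... 
      -- -(a-x)-(b-x) - (a-b) = -2(a-x). so 2(a-x) = 0
      have h0 : 2 * ((a : ZMod n) - x) = 0 := by linear_combination h1 - h2 - hFab
      linear_combination h1 - h0
    · -- e = -1, h1 = -, h2 = +: goal Fa-Fx = -(a-x), h1 gives it
      linear_combination h1
    · -- e = 1, h1 = -, h2 = -: -(a-x)+(b-x) = (a-b) => 2(a-b)=0 contra
      exfalso
      exact hab2 (by linear_combination h1 - h2 - hFab)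
    · -- e = -1, h1 = -, h2 = -
      linear_combination h1
  refine ⟨e, c, he, ?_⟩
  funext x
  by_cases hx : x ∈ A
  · rw [hsome x hx, amap_some n hx]
    congr 1
    have := key x hx
    rw [← this, zrep_cast n (hfvIcc x hx)]
  · have hnone : f x = none := by
      cases hfx : f x with
      | none => rfl
      | some y =>
        exfalso
        apply hx
        simp only [hAdef, domF, Finset.mem_filter]
        exact ⟨(hdom x y hfx).1, by rw [hfx]; rfl⟩
    rw [hnone]
    unfold amap
    rw [if_neg hx]

end Main

def pmap (x0 y0 : ℕ) : ℕ → Option ℕ := fun x => if x = x0 then some y0 else none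

lemma cdist_self (n x : ℕ) : cdist n x x = 0 := by simp [cdist]

lemma count_one (n : ℕ) (hn : 3 ≤ n) :
    Set.ncard {f : ℕ → Option ℕ | PIso n f ∧ (domF n f).card = 1} = n ^ 2 := by
  classical
  have hset : {f : ℕ → Option ℕ | PIso n f ∧ (domF n f).card = 1} =
      ↑(((Finset.Icc 1 n) ×ˢ (Finset.Icc 1 n)).image (fun p => pmap p.1 p.2)) := by
    ext f
    simp only [Set.mem_setOf_eq, Finset.coe_image, Set.mem_image, Finset.mem_coe,
      Finset.mem_product]
    constructor
    · rintro ⟨⟨hdom, hinj, hdist⟩, hcard⟩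
      obtain ⟨x0, hx0⟩ := Finset.card_eq_one.mp hcard
      have hx0mem : x0 ∈ domF n f := by rw [hx0]; exact Finset.mem_singleton_self x0
      simp only [domF, Finset.mem_filter] at hx0mem
      obtain ⟨y0, hy0⟩ := Option.isSome_iff_exists.mp hx0mem.2
      refine ⟨(x0, y0), ⟨hx0mem.1, (hdom x0 y0 hy0).2⟩, ?_⟩
      funext x
      unfold pmap
      split_ifs with hx
      · subst hx; exact hy0.symm
      · cases hfx : f x with
        | none => rfl
        | some z =>
          exfalso
          apply hx
          have : x ∈ domF n f := by
            simp only [domF, Finset.mem_filter]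
            exact ⟨(hdom x z hfx).1, by rw [hfx]; rfl⟩
          rw [hx0, Finset.mem_singleton] at this
          exact this
    · rintro ⟨⟨x0, y0⟩, ⟨hx0, hy0⟩, rfl⟩
      simp only
      have hval : ∀ x y, pmap x0 y0 x = some y → x = x0 ∧ y = y0 := by
        intro x y h
        unfold pmap at h
        split_ifs at h with hx
        exact ⟨hx, (Option.some_injective _ h).symm⟩
      refine ⟨⟨?_, ?_, ?_⟩, ?_⟩
      · intro x y h
        obtain ⟨rfl, rfl⟩ := hval x y h
        exact ⟨hx0, hy0⟩
      · intro x y z hx hy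
        obtain ⟨rfl, rfl⟩ := hval x z hx
        obtain ⟨rfl, -⟩ := hval y _ hy
        rfl
      · intro x y x' y' hx hy
        obtain ⟨rfl, rfl⟩ := hval x x' hx
        obtain ⟨rfl, rfl⟩ := hval y y' hy
        rw [cdist_self, cdist_self]
      · have : domF n (pmap x0 y0) = {x0} := by
          ext x
          simp only [domF, Finset.mem_filter, Finset.mem_singleton]
          constructor
          · rintro ⟨-, h⟩
            obtain ⟨y, hy⟩ := Option.isSome_iff_exists.mp h
            exact (hval x y hy).1
          · rintro rfl
            exact ⟨hx0, by unfold pmap; simp⟩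
        rw [this, Finset.card_singleton]
  rw [hset, Set.ncard_coe_finset]
  rw [Finset.card_image_of_injOn, Finset.card_product, Nat.card_Icc]
  · have h1 : n + 1 - 1 = n := by omega
    rw [h1]; ring
  · intro p hp q hq h
    simp only at h
    have h1 : pmap p.1 p.2 p.1 = some p.2 := by unfold pmap; simp
    rw [h] at h1
    unfold pmap at h1
    split_ifs at h1 with hx
    have := Option.some_injective _ h1
    exact Prod.ext hx this.symm

lemma count_k (n k : ℕ) (hn : 3 ≤ n) (hk3 : 3 ≤ k) (hkn : k ≤ n) :
    Set.ncard {f : ℕ → Option ℕ | PIso n f ∧ (domF n f).card = k} =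
      2 * n * Nat.choose n k := by
  classical
  haveI : NeZero n := ⟨by omega⟩
  set s : Finset (ZMod n × ZMod n × Finset ℕ) :=
    ({1, -1} : Finset (ZMod n)) ×ˢ (Finset.univ ×ˢ (Finset.Icc 1 n).powersetCard k) with hs
  set F : ZMod n × ZMod n × Finset ℕ → (ℕ → Option ℕ) :=
    (fun p => amap n p.1 p.2.1 p.2.2) with hF
  have hmem_s : ∀ p : ZMod n × ZMod n × Finset ℕ,
      p ∈ s ↔ (p.1 = 1 ∨ p.1 = -1) ∧ p.2.2 ⊆ Finset.Icc 1 n ∧ p.2.2.card = k := by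
    intro p
    simp only [hs, Finset.mem_product, Finset.mem_insert, Finset.mem_singleton,
      Finset.mem_univ, true_and, Finset.mem_powersetCard]
  have hset : {f : ℕ → Option ℕ | PIso n f ∧ (domF n f).card = k} = ↑(s.image F) := by
    ext f
    simp only [Set.mem_setOf_eq, Finset.coe_image, Set.mem_image, Finset.mem_coe]
    constructor
    · rintro ⟨hPI, hcard⟩
      obtain ⟨e, c, he, hfe⟩ := PIso_eq_amap n hPI (by omega)
      refine ⟨(e, c, domF n f), ?_, hfe.symm⟩
      rw [hmem_s]
      exact ⟨he, Finset.filter_subset _ _, hcard⟩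
    · rintro ⟨p, hp, rfl⟩
      rw [hmem_s] at hp
      obtain ⟨he, hA, hcard⟩ := hp
      exact ⟨amap_PIso n he hA, by rw [domF_amap n hA]; exact hcard⟩
  rw [hset, Set.ncard_coe_finset]
  rw [Finset.card_image_of_injOn]
  · rw [hs, Finset.card_product, Finset.card_product, Finset.card_powersetCard,
      Nat.card_Icc, Finset.card_univ, ZMod.card]
    have h2 : ({1, -1} : Finset (ZMod n)).card = 2 := by
      rw [Finset.card_insert_of_notMem, Finset.card_singleton]
      simp only [Finset.mem_singleton]
      intro h
      have h0 : ((2 : ℕ) : ZMod n) = 0 := by push_cast; linear_combination h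
      rw [ZMod.natCast_eq_zero_iff] at h0
      have := Nat.le_of_dvd (by norm_num) h0
      omega
    rw [h2]
    have : n + 1 - 1 = n := by omega
    rw [this]
    ring
  · intro p hp q hq h
    simp only [Finset.mem_coe] at hp hq
    rw [hmem_s] at hp hq
    simp only [hF] at h
    have := amap_injective n hp.1 hq.1 hp.2.1 (by omega) h
    exact Prod.ext this.1 (Prod.ext this.2.1 this.2.2)

/-- the number of partial isometries of `C_n` with domain of size `1` is
`n²`, and with domain of size `k` (`3 ≤ k ≤ n`) is `2n·C(n,k)`. -/
theorem stmt_12 (n : ℕ) (hn : 3 ≤ n) :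
    Set.ncard {f : ℕ → Option ℕ | PIso n f ∧ (domF n f).card = 1} = n ^ 2 ∧
    ∀ k, 3 ≤ k → k ≤ n →
      Set.ncard {f : ℕ → Option ℕ | PIso n f ∧ (domF n f).card = k} =
        2 * n * Nat.choose n k :=
  ⟨count_one n hn, fun k hk3 hkn => count_k n k hn hk3 hkn⟩
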